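/- If (w₁, w₂) is a half-synchronizing word of the product subshift Y × Z (with w₁ ∈ L(Y), w₂ ∈ L(Z) of equal length), then w₁ is a half-synchronizing word of Y and w₂ is a half-synchronizing word of Z. -/

import Mathlib

namespace Paper

variable {A B C : Type*}

def shiftMap (x : ℤ → A) : ℤ → A := fun i => x (i + 1)

def shiftInvMap (x : ℤ → A) : ℤ → A := fun i => x (i - 1)

/-- A subshift: nonempty, shift-invariant (both directions), and closed
(expressed combinatorially: any configuration all of whose central patterns
are approximated by members is a member). -/
def IsSubshift (X : Set (ℤ → A)) : Prop :=
  X.Nonempty ∧ (∀ x ∈ X, shiftMap x ∈ X) ∧ (∀ x ∈ X, shiftInvMap x ∈ X) ∧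
  ∀ x : ℤ → A, (∀ n : ℕ, ∃ y ∈ X, ∀ i : ℤ, |i| ≤ (n : ℤ) → y i = x i) → x ∈ X

/-- The word `x[i, i+k-1]`. -/
def cfgWord (x : ℤ → A) (i : ℤ) (k : ℕ) : List A :=
  List.ofFn (fun t : Fin k => x (i + ((t : ℕ) : ℤ)))

/-- The language of a set of configurations. -/
def lang (X : Set (ℤ → A)) : Set (List A) := {w | ∃ x ∈ X, ∃ i : ℤ, cfgWord x i w.length = w}

def TransitiveShift (X : Set (ℤ → A)) : Prop :=
  ∀ u ∈ lang X, ∀ v ∈ lang X, ∃ w : List A, u ++ w ++ v ∈ lang X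

/-- Left ray of a configuration: `leftRay x n = x (-1-n)`. -/
def leftRay (x : ℤ → A) : ℕ → A := fun n => x (-1 - (n : ℤ))

def rightRay (x : ℤ → A) : ℕ → A := fun n => x (n : ℤ)

def LeftRays (X : Set (ℤ → A)) : Set (ℕ → A) := leftRay '' X

def RightRays (X : Set (ℤ → A)) : Set (ℕ → A) := rightRay '' X

/-- Glue a left ray and a right ray into a configuration. -/
def glue (l r : ℕ → A) : ℤ → A := fun i => if 0 ≤ i then r i.toNat else l (-1 - i).toNat

/-- Follower set of a left-infinite sequence. -/
def foll (X : Set (ℤ → A)) (l : ℕ → A) : Set (ℕ → A) := {r | glue l r ∈ X}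

def wordThen (w : List A) (r : ℕ → A) : ℕ → A :=
  fun n => if h : n < w.length then w.get ⟨n, h⟩ else r (n - w.length)

/-- Follower set of a word. -/
def follW (X : Set (ℤ → A)) (w : List A) : Set (ℕ → A) := {r | wordThen w r ∈ RightRays X}

def occursInLeft (l : ℕ → A) (w : List A) : Prop :=
  ∃ j : ℕ, ∀ k : Fin w.length, l (j + (w.length - 1 - (k : ℕ))) = w.get k

/-- The language of a left-infinite sequence. -/
def langL (l : ℕ → A) : Set (List A) := {w | occursInLeft l w}

/-- The left ray `l` ends with the word `w`. -/
def raySuffix (l : ℕ → A) (w : List A) : Prop :=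
  ∀ k : Fin w.length, l (w.length - 1 - (k : ℕ)) = w.get k

def HalfSyncWord (X : Set (ℤ → A)) (w : List A) : Prop :=
  w ∈ lang X ∧ ∃ l ∈ LeftRays X, raySuffix l w ∧ langL l = lang X ∧ foll X l = follW X w

def HalfSynchronized (X : Set (ℤ → A)) : Prop := TransitiveShift X ∧ ∃ w, HalfSyncWord X w

def SyncWord (X : Set (ℤ → A)) (w : List A) : Prop :=
  w ∈ lang X ∧ ∀ l ∈ LeftRays X, raySuffix l w → foll X l = follW X w

def Synchronized (X : Set (ℤ → A)) : Prop := TransitiveShift X ∧ ∃ w, SyncWord X w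

/-- Product of two subshifts, over the product alphabet. -/
def prodShift (Y : Set (ℤ → B)) (Z : Set (ℤ → C)) : Set (ℤ → B × C) :=
  {x | (fun i => (x i).1) ∈ Y ∧ (fun i => (x i).2) ∈ Z}

/-- Identification of a pair of sets of right rays with a set of right rays
over the product alphabet. -/
def prodRaySet (S : Set (ℕ → B)) (T : Set (ℕ → C)) : Set (ℕ → B × C) :=
  {r | (fun n => (r n).1) ∈ S ∧ (fun n => (r n).2) ∈ T}

/-- Extend a left ray by one more symbol on the right. -/
def extendRay (l : ℕ → A) (a : A) : ℕ → A := fun n => if n = 0 then a else l (n - 1)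

/-- Edge of the Krieger graph from `u` to `v` labeled `a`. -/
def KEdge (X : Set (ℤ → A)) (u : Set (ℕ → A)) (a : A) (v : Set (ℕ → A)) : Prop :=
  ∃ l ∈ LeftRays X, extendRay l a ∈ LeftRays X ∧ u = foll X l ∧ v = foll X (extendRay l a)

def KStep (X : Set (ℤ → A)) (u v : Set (ℕ → A)) : Prop := ∃ a, KEdge X u a v

/-- Existence of a finite path in the Krieger graph. -/
def KReach (X : Set (ℤ → A)) : Set (ℕ → A) → Set (ℕ → A) → Prop :=
  Relation.ReflTransGen (KStep X)

def KVertex (X : Set (ℤ → A)) (v : Set (ℕ → A)) : Prop := ∃ l ∈ LeftRays X, v = foll X l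

/-- A subshift is sofic iff it has finitely many follower sets. -/
def Sofic (X : Set (ℤ → A)) : Prop := {v : Set (ℕ → A) | KVertex X v}.Finite

/-- Vertex of the Fischer graph (w.r.t. half-synchronizing word `w`): a vertex of the
Krieger graph in the maximal strongly connected subgraph containing `foll w`. -/
def FVertex (X : Set (ℤ → A)) (w : List A) (v : Set (ℕ → A)) : Prop :=
  KVertex X v ∧ KReach X (follW X w) v ∧ KReach X v (follW X w)

/-- Directed (multi)graph with vertex type `V` and edge type `E`. -/
structure DiGraph (V : Type*) (E : Type*) where
  ini : E → V
  ter : E → V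

variable {V E V' E' : Type*}

/-- Bi-infinite path on a graph. -/
def BiPath (G : DiGraph V E) (x : ℤ → E) : Prop := ∀ i : ℤ, G.ter (x i) = G.ini (x (i + 1))

/-- `p` is a finite path of `m+1` edges. -/
def FinPath (G : DiGraph V E) (m : ℕ) (p : Fin (m + 1) → E) : Prop :=
  ∀ k : Fin m, G.ter (p k.castSucc) = G.ini (p k.succ)

/-- The subpath `x[i, i+n]` of a bi-infinite path is a shortest path between its endpoints. -/
def GeodesicSeg (G : DiGraph V E) (x : ℤ → E) (i : ℤ) (n : ℕ) : Prop :=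
  ∀ (m : ℕ) (p : Fin (m + 1) → E), FinPath G m p →
    G.ini (p 0) = G.ini (x i) → G.ter (p (Fin.last m)) = G.ter (x (i + (n : ℤ))) → n ≤ m

def EvGeodesic (G : DiGraph V E) (x : ℤ → E) : Prop :=
  ∃ i₀ : ℤ, ∀ i : ℤ, i₀ ≤ i → ∀ n : ℕ, GeodesicSeg G x i n

/-- Strictly proximal pair of bi-infinite paths. -/
def StrictProxPair (x y : ℤ → E) : Prop :=
  (∀ n : ℕ, ∃ i : ℕ, ∀ k : ℕ, k ≤ n → x ((i : ℤ) + (k : ℤ)) = y ((i : ℤ) + (k : ℤ))) ∧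
  ∀ N : ℕ, ∃ i : ℕ, N ≤ i ∧ x ((i : ℕ) : ℤ) ≠ y ((i : ℕ) : ℤ)

def HasEvGeoProxPair (G : DiGraph V E) : Prop :=
  ∃ x y : ℤ → E, BiPath G x ∧ BiPath G y ∧ EvGeodesic G x ∧ EvGeodesic G y ∧ StrictProxPair x y

/-- Edges of the Fischer graph: Krieger edges between Fischer vertices. -/
def FischerE (X : Set (ℤ → A)) (w : List A) : Type _ :=
  {t : Set (ℕ → A) × A × Set (ℕ → A) //
    FVertex X w t.1 ∧ FVertex X w t.2.2 ∧ KEdge X t.1 t.2.1 t.2.2}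

def FischerGraph (X : Set (ℤ → A)) (w : List A) : DiGraph (Set (ℕ → A)) (FischerE X w) :=
  ⟨fun e => e.1.1, fun e => e.1.2.2⟩

def SlidingBlockCode (X : Set (ℤ → A)) (F : (ℤ → A) → (ℤ → B)) : Prop :=
  ∃ (r : ℕ) (f : (Fin (2 * r + 1) → A) → B),
    ∀ x ∈ X, ∀ i : ℤ, F x i = f (fun k => x (i + ((k : ℕ) : ℤ) - (r : ℤ)))

def ShiftConjugate (X : Set (ℤ → A)) (Y : Set (ℤ → B)) : Prop :=
  ∃ F : (ℤ → A) → (ℤ → B), SlidingBlockCode X F ∧ Set.InjOn F X ∧ F '' X = Y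

def DirectPrime (X : Set (ℤ → A)) : Prop :=
  ∀ (B C : Type) (_ : Finite B) (_ : Finite C) (Y : Set (ℤ → B)) (Z : Set (ℤ → C)),
    IsSubshift Y → IsSubshift Z → ShiftConjugate X (prodShift Y Z) →
    (∃ y, Y = {y}) ∨ (∃ z, Z = {z})

section Helpers

variable {Y : Set (ℤ → B)} {Z : Set (ℤ → C)}

lemma shift_mem {X : Set (ℤ → A)} (hX : IsSubshift X) {x : ℤ → A} (hx : x ∈ X) (i : ℤ) :
    (fun j => x (j + i)) ∈ X := by
  induction i using Int.induction_on with
  | zero => simpa using hx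
  | succ n ih =>
      have h := hX.2.1 _ ih
      have he : (fun j : ℤ => x (j + ((n : ℤ) + 1))) = shiftMap (fun j => x (j + (n : ℤ))) := by
        funext j; simp only [shiftMap]; congr 1; ring
      rw [he]; exact h
  | pred n ih =>
      have h := hX.2.2.1 _ ih
      have he : (fun j : ℤ => x (j + (-(n : ℤ) - 1))) = shiftInvMap (fun j => x (j + -(n : ℤ))) := by
        funext j; simp only [shiftInvMap]; congr 1; ring
      rw [he]; exact h

lemma glue_fst (l r : ℕ → B × C) :
    (fun i => (glue l r i).1) = glue (fun n => (l n).1) (fun n => (r n).1) := by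
  funext i; unfold glue; split <;> rfl

lemma glue_snd (l r : ℕ → B × C) :
    (fun i => (glue l r i).2) = glue (fun n => (l n).2) (fun n => (r n).2) := by
  funext i; unfold glue; split <;> rfl

lemma glue_leftRay_rightRay (x : ℤ → A) : glue (leftRay x) (rightRay x) = x := by
  funext i; unfold glue leftRay rightRay; split <;> (congr 1; omega)

lemma wordThen_fst (w : List (B × C)) (r : ℕ → B × C) :
    (fun n => (wordThen w r n).1) = wordThen (w.map Prod.fst) (fun n => (r n).1) := by
  funext n; unfold wordThen
  simp only [List.length_map]
  by_cases h : n < w.length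
  · simp [h]
  · simp [h]

lemma wordThen_snd (w : List (B × C)) (r : ℕ → B × C) :
    (fun n => (wordThen w r n).2) = wordThen (w.map Prod.snd) (fun n => (r n).2) := by
  funext n; unfold wordThen
  simp only [List.length_map]
  by_cases h : n < w.length
  · simp [h]
  · simp [h]

lemma cfgWord_map {A' : Type*} (f : A → A') (x : ℤ → A) (i : ℤ) (k : ℕ) :
    (cfgWord x i k).map f = cfgWord (fun j => f (x j)) i k := by
  simp [cfgWord, List.map_ofFn]; rfl

lemma rightRays_prod_mk {y : ℕ → B} {z : ℕ → C} (hy : y ∈ RightRays Y) (hz : z ∈ RightRays Z)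
    {r : ℕ → B × C} (h1 : (fun n => (r n).1) = y) (h2 : (fun n => (r n).2) = z) :
    r ∈ RightRays (prodShift Y Z) := by
  obtain ⟨y', hy', rfl⟩ := hy
  obtain ⟨z', hz', rfl⟩ := hz
  refine ⟨fun j => (y' j, z' j), ⟨hy', hz'⟩, ?_⟩
  funext n
  have e1 := congrFun h1 n
  have e2 := congrFun h2 n
  simp only [rightRay] at *
  exact Prod.ext e1.symm e2.symm

lemma rightRays_fst {r : ℕ → B × C} (h : r ∈ RightRays (prodShift Y Z)) :
    (fun n => (r n).1) ∈ RightRays Y := by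
  obtain ⟨x, hx, rfl⟩ := h
  exact ⟨fun j => (x j).1, hx.1, rfl⟩

lemma rightRays_snd {r : ℕ → B × C} (h : r ∈ RightRays (prodShift Y Z)) :
    (fun n => (r n).2) ∈ RightRays Z := by
  obtain ⟨x, hx, rfl⟩ := h
  exact ⟨fun j => (x j).2, hx.2, rfl⟩

lemma lang_map_fst {w : List (B × C)} (h : w ∈ lang (prodShift Y Z)) :
    w.map Prod.fst ∈ lang Y := by
  obtain ⟨x, hx, i, hi⟩ := h
  refine ⟨fun j => (x j).1, hx.1, i, ?_⟩
  rw [List.length_map, ← cfgWord_map, hi]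

lemma lang_map_snd {w : List (B × C)} (h : w ∈ lang (prodShift Y Z)) :
    w.map Prod.snd ∈ lang Z := by
  obtain ⟨x, hx, i, hi⟩ := h
  refine ⟨fun j => (x j).2, hx.2, i, ?_⟩
  rw [List.length_map, ← cfgWord_map, hi]

lemma lang_prod_fst {u : List B} (hu : u ∈ lang Y) (hz : Z.Nonempty) :
    ∃ w' : List (B × C), w'.map Prod.fst = u ∧ w' ∈ lang (prodShift Y Z) := by
  obtain ⟨y, hy, i, hi⟩ := hu
  obtain ⟨z, hzz⟩ := hz
  refine ⟨cfgWord (fun k => (y k, z k)) i u.length, ?_, ?_⟩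
  · rw [cfgWord_map]; exact hi
  · exact ⟨fun k => (y k, z k), ⟨hy, hzz⟩, i, by
      simp [cfgWord, List.length_ofFn]⟩

lemma lang_prod_snd {u : List C} (hu : u ∈ lang Z) (hy : Y.Nonempty) :
    ∃ w' : List (B × C), w'.map Prod.snd = u ∧ w' ∈ lang (prodShift Y Z) := by
  obtain ⟨z, hz, i, hi⟩ := hu
  obtain ⟨y, hyy⟩ := hy
  refine ⟨cfgWord (fun k => (y k, z k)) i u.length, ?_, ?_⟩
  · rw [cfgWord_map]; exact hi
  · exact ⟨fun k => (y k, z k), ⟨hyy, hz⟩, i, by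
      simp [cfgWord, List.length_ofFn]⟩

lemma occursInLeft_map_fst {l : ℕ → B × C} {w : List (B × C)} (h : occursInLeft l w) :
    occursInLeft (fun n => (l n).1) (w.map Prod.fst) := by
  obtain ⟨j, hj⟩ := h
  refine ⟨j, fun k => ?_⟩
  have hk : (k : ℕ) < w.length := by simpa using k.2
  have := congrArg Prod.fst (hj ⟨k, hk⟩)
  simpa [List.length_map] using this

lemma occursInLeft_map_snd {l : ℕ → B × C} {w : List (B × C)} (h : occursInLeft l w) :
    occursInLeft (fun n => (l n).2) (w.map Prod.snd) := by
  obtain ⟨j, hj⟩ := h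
  refine ⟨j, fun k => ?_⟩
  have hk : (k : ℕ) < w.length := by simpa using k.2
  have := congrArg Prod.snd (hj ⟨k, hk⟩)
  simpa [List.length_map] using this

lemma occursInLeft_lift_fst {l : ℕ → B × C} {u : List B}
    (h : occursInLeft (fun n => (l n).1) u) :
    ∃ w' : List (B × C), w'.map Prod.fst = u ∧ occursInLeft l w' := by
  obtain ⟨j, hj⟩ := h
  refine ⟨List.ofFn (fun k : Fin u.length => l (j + (u.length - 1 - (k : ℕ)))), ?_, ?_⟩
  · rw [List.map_ofFn]
    have : (Prod.fst ∘ fun k : Fin u.length => l (j + (u.length - 1 - (k : ℕ)))) = u.get := by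
      funext k; exact hj k
    rw [this, List.ofFn_get]
  · refine ⟨j, fun k => ?_⟩
    simp [List.get_ofFn]

lemma occursInLeft_lift_snd {l : ℕ → B × C} {u : List C}
    (h : occursInLeft (fun n => (l n).2) u) :
    ∃ w' : List (B × C), w'.map Prod.snd = u ∧ occursInLeft l w' := by
  obtain ⟨j, hj⟩ := h
  refine ⟨List.ofFn (fun k : Fin u.length => l (j + (u.length - 1 - (k : ℕ)))), ?_, ?_⟩
  · rw [List.map_ofFn]
    have : (Prod.snd ∘ fun k : Fin u.length => l (j + (u.length - 1 - (k : ℕ)))) = u.get := by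
      funext k; exact hj k
    rw [this, List.ofFn_get]
  · refine ⟨j, fun k => ?_⟩
    simp [List.get_ofFn]

lemma get_of_cfgWord {x : ℤ → A} {i : ℤ} {w : List A}
    (hcw : cfgWord x i w.length = w) (j : Fin w.length) :
    w.get j = x (i + ((j : ℕ) : ℤ)) := by
  have hlen : (cfgWord x i w.length).length = w.length := by rw [hcw]
  have h := List.get_of_eq hcw ⟨(j : ℕ), by simpa [hlen] using j.2⟩
  rw [← h]
  simp [cfgWord, List.get_ofFn]

lemma half_fst (hY : IsSubshift Y) (hZ : IsSubshift Z)
    (w : List (B × C)) (hw : HalfSyncWord (prodShift Y Z) w) :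
    HalfSyncWord Y (w.map Prod.fst) := by
  obtain ⟨hwlang, l, hl, hsuf, hlangL, hfoll⟩ := hw
  obtain ⟨x₀, hx₀, rfl⟩ := hl
  refine ⟨lang_map_fst hwlang, leftRay (fun i => (x₀ i).1), ⟨_, hx₀.1, rfl⟩, ?_, ?_, ?_⟩
  · -- raySuffix
    intro k
    have hk : (k : ℕ) < w.length := by simpa using k.2
    have := congrArg Prod.fst (hsuf ⟨k, hk⟩)
    simpa [List.length_map, leftRay] using this
  · -- langL = lang Y
    ext u
    constructor
    · intro hu
      obtain ⟨w', hmap, hocc⟩ := occursInLeft_lift_fst (l := leftRay x₀) hu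
      have hw' : w' ∈ lang (prodShift Y Z) := by rw [← hlangL]; exact hocc
      rw [← hmap]; exact lang_map_fst hw'
    · intro hu
      obtain ⟨w', hmap, hw'⟩ := lang_prod_fst hu hZ.1
      have hocc : w' ∈ langL (leftRay x₀) := by rw [hlangL]; exact hw'
      have := occursInLeft_map_fst (l := leftRay x₀) hocc
      rwa [hmap] at this
  · -- foll = follW
    ext r
    constructor
    · intro hr
      have hr' : glue (leftRay (fun i => (x₀ i).1)) r ∈ Y := hr
      set rp : ℕ → B × C := fun n => (r n, (x₀ (n : ℤ)).2) with hrp_def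
      have hrp : glue (leftRay x₀) rp ∈ prodShift Y Z := by
        constructor
        · rw [glue_fst]; exact hr'
        · rw [glue_snd]
          have hg := glue_leftRay_rightRay (fun i => (x₀ i).2)
          exact hg ▸ hx₀.2
      have hm : rp ∈ follW (prodShift Y Z) w := by rw [← hfoll]; exact hrp
      have h1 := rightRays_fst hm
      rw [wordThen_fst] at h1
      exact h1
    · intro hr
      have hr' : wordThen (w.map Prod.fst) r ∈ RightRays Y := hr
      obtain ⟨x, hx, i, hcw⟩ := hwlang
      set t : ℕ → C := fun n => (x (i + (w.length : ℤ) + (n : ℤ))).2 with ht_def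
      have hz' : (fun j : ℤ => (x (j + i)).2) ∈ Z := shift_mem hZ hx.2 i
      have ht : wordThen (w.map Prod.snd) t ∈ RightRays Z := by
        refine ⟨fun j => (x (j + i)).2, hz', ?_⟩
        funext n
        unfold rightRay wordThen
        simp only [List.length_map]
        by_cases h : n < w.length
        · rw [dif_pos h]
          have hg := congrArg Prod.snd (get_of_cfgWord hcw ⟨n, h⟩)
          simp only [List.getElem_map, List.get_eq_getElem]
          rw [List.get_eq_getElem] at hg
          simp only [List.getElem_map] at hg ⊢
          rw [hg]
          show (x ((n : ℤ) + i)).2 = (x (i + (n : ℤ))).2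
          rw [Int.add_comm (n : ℤ) i]
        · rw [dif_neg h]
          show (x ((n : ℤ) + i)).2 = (x (i + (w.length : ℤ) + ((n - w.length : ℕ) : ℤ))).2
          congr 2
          omega
      have hwt : wordThen w (fun n => (r n, t n)) ∈ RightRays (prodShift Y Z) := by
        refine rightRays_prod_mk hr' ht ?_ ?_
        · rw [wordThen_fst]
        · rw [wordThen_snd]
      have hmem : (fun n => (r n, t n)) ∈ foll (prodShift Y Z) (leftRay x₀) := by
        rw [hfoll]; exact hwt
      have h1 := hmem.1
      rw [glue_fst] at h1
      exact h1

lemma half_snd (hY : IsSubshift Y) (hZ : IsSubshift Z)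
    (w : List (B × C)) (hw : HalfSyncWord (prodShift Y Z) w) :
    HalfSyncWord Z (w.map Prod.snd) := by
  obtain ⟨hwlang, l, hl, hsuf, hlangL, hfoll⟩ := hw
  obtain ⟨x₀, hx₀, rfl⟩ := hl
  refine ⟨lang_map_snd hwlang, leftRay (fun i => (x₀ i).2), ⟨_, hx₀.2, rfl⟩, ?_, ?_, ?_⟩
  · intro k
    have hk : (k : ℕ) < w.length := by simpa using k.2
    have := congrArg Prod.snd (hsuf ⟨k, hk⟩)
    simpa [List.length_map, leftRay] using this
  · ext u
    constructor
    · intro hu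
      obtain ⟨w', hmap, hocc⟩ := occursInLeft_lift_snd (l := leftRay x₀) hu
      have hw' : w' ∈ lang (prodShift Y Z) := by rw [← hlangL]; exact hocc
      rw [← hmap]; exact lang_map_snd hw'
    · intro hu
      obtain ⟨w', hmap, hw'⟩ := lang_prod_snd hu hY.1
      have hocc : w' ∈ langL (leftRay x₀) := by rw [hlangL]; exact hw'
      have := occursInLeft_map_snd (l := leftRay x₀) hocc
      rwa [hmap] at this
  · ext r
    constructor
    · intro hr
      have hr' : glue (leftRay (fun i => (x₀ i).2)) r ∈ Z := hr
      set rp : ℕ → B × C := fun n => ((x₀ (n : ℤ)).1, r n) with hrp_def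
      have hrp : glue (leftRay x₀) rp ∈ prodShift Y Z := by
        constructor
        · rw [glue_fst]
          have hg := glue_leftRay_rightRay (fun i => (x₀ i).1)
          exact hg ▸ hx₀.1
        · rw [glue_snd]; exact hr'
      have hm : rp ∈ follW (prodShift Y Z) w := by rw [← hfoll]; exact hrp
      have h1 := rightRays_snd hm
      rw [wordThen_snd] at h1
      exact h1
    · intro hr
      have hr' : wordThen (w.map Prod.snd) r ∈ RightRays Z := hr
      obtain ⟨x, hx, i, hcw⟩ := hwlang
      set t : ℕ → B := fun n => (x (i + (w.length : ℤ) + (n : ℤ))).1 with ht_def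
      have hz' : (fun j : ℤ => (x (j + i)).1) ∈ Y := shift_mem hY hx.1 i
      have ht : wordThen (w.map Prod.fst) t ∈ RightRays Y := by
        refine ⟨fun j => (x (j + i)).1, hz', ?_⟩
        funext n
        unfold rightRay wordThen
        simp only [List.length_map]
        by_cases h : n < w.length
        · rw [dif_pos h]
          have hg := congrArg Prod.fst (get_of_cfgWord hcw ⟨n, h⟩)
          simp only [List.getElem_map, List.get_eq_getElem]
          rw [List.get_eq_getElem] at hg
          simp only [List.getElem_map] at hg ⊢
          rw [hg]
          show (x ((n : ℤ) + i)).1 = (x (i + (n : ℤ))).1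
          rw [Int.add_comm (n : ℤ) i]
        · rw [dif_neg h]
          show (x ((n : ℤ) + i)).1 = (x (i + (w.length : ℤ) + ((n - w.length : ℕ) : ℤ))).1
          congr 2
          omega
      have hwt : wordThen w (fun n => (t n, r n)) ∈ RightRays (prodShift Y Z) := by
        refine rightRays_prod_mk ht hr' ?_ ?_
        · rw [wordThen_fst]
        · rw [wordThen_snd]
      have hmem : (fun n => (t n, r n)) ∈ foll (prodShift Y Z) (leftRay x₀) := by
        rw [hfoll]; exact hwt
      have h1 := hmem.2
      rw [glue_snd] at h1
      exact h1

end Helpers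

theorem stmt2 [Finite B] [Finite C]
    (Y : Set (ℤ → B)) (Z : Set (ℤ → C)) (hY : IsSubshift Y) (hZ : IsSubshift Z)
    (w : List (B × C)) (hw : HalfSyncWord (prodShift Y Z) w) :
    HalfSyncWord Y (w.map Prod.fst) ∧ HalfSyncWord Z (w.map Prod.snd) := by
  exact ⟨half_fst hY hZ w hw, half_snd hY hZ w hw⟩

end Paper
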